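/- Let (X,r) be a square-free solution of finite order |X| = n with cyclic degree p, let G = G(X,r), and let φ : G → Sym(X) be any group homomorphism with φ(ι(x)) = σ_x for all x ∈ X; let 𝒢 = φ(G) be its image (the permutation group of (X,r)). Then the order of 𝒢 divides p^n. In particular, if p is a prime number, then 𝒢 is a p-group. -/

import Mathlib

/-- The left action `σ_x(y)`: first component of `r (x, y)`. -/
def sig {X : Type*} (r : X × X → X × X) (x y : X) : X := (r (x, y)).1

/-- The right action `τ_y(x)`: second component of `r (x, y)`. -/
def tau {X : Type*} (r : X × X → X × X) (y x : X) : X := (r (x, y)).2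

/-- `r¹² = r × id`. -/
def r12 {X : Type*} (r : X × X → X × X) : X × X × X → X × X × X :=
  fun t => ((r (t.1, t.2.1)).1, (r (t.1, t.2.1)).2, t.2.2)

/-- `r²³ = id × r`. -/
def r23 {X : Type*} (r : X × X → X × X) : X × X × X → X × X × X :=
  fun t => (t.1, (r (t.2.1, t.2.2)).1, (r (t.2.1, t.2.2)).2)

/-- The braid relation `r¹² ∘ r²³ ∘ r¹² = r²³ ∘ r¹² ∘ r²³`. -/
def IsBraided {X : Type*} (r : X × X → X × X) : Prop :=
  r12 r ∘ r23 r ∘ r12 r = r23 r ∘ r12 r ∘ r23 r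

/-- Nondegeneracy: every `σ_x` and every `τ_y` is bijective. -/
def Nondegenerate {X : Type*} (r : X × X → X × X) : Prop :=
  (∀ x, Function.Bijective (sig r x)) ∧ (∀ y, Function.Bijective (tau r y))

/-- The defining relators of the group `G(X,r)`:
`x · y · (σ_x(y) · τ_y(x))⁻¹` for all `x, y ∈ X`. -/
def ybRels {X : Type*} (r : X × X → X × X) : Set (FreeGroup X) :=
  { w | ∃ x y : X, w = FreeGroup.of x * FreeGroup.of y *
      (FreeGroup.of (sig r x y) * FreeGroup.of (tau r y x))⁻¹ }

/-- The group `G(X,r)` associated with `(X,r)`, presented by generators `X`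
and relations `x y = σ_x(y) τ_y(x)`. -/
abbrev YBGroup {X : Type*} (r : X × X → X × X) := PresentedGroup (ybRels r)

/-- The canonical map `ι : X → G(X,r)`. -/
def ybι {X : Type*} (r : X × X → X × X) : X → YBGroup r := PresentedGroup.of

set_option linter.unusedSectionVars false
namespace YBAux

variable {X : Type*} [DecidableEq X] (r : X × X → X × X) (hnd : Nondegenerate r)

/-- `σ_x` as a permutation. -/
noncomputable def sp (x : X) : Equiv.Perm X := Equiv.ofBijective (sig r x) (hnd.1 x)

lemma sp_apply (x y : X) : sp r hnd x y = sig r x y := rfl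

/-- product of the `σ`'s along a list. -/
noncomputable def Lam : List X → Equiv.Perm X
  | [] => 1
  | x :: t => sp r hnd x * Lam t

/-- the (ℕ-valued) cocycle of a list. -/
noncomputable def P : List X → X → ℕ
  | [] => fun _ => 0
  | x :: t => fun y => (if y = x then 1 else 0) + P t ((sp r hnd x)⁻¹ y)

lemma Lam_nil : Lam r hnd [] = 1 := rfl
lemma Lam_cons (x : X) (t : List X) : Lam r hnd (x :: t) = sp r hnd x * Lam r hnd t := rfl
lemma P_nil (y : X) : P r hnd [] y = 0 := rfl
lemma P_cons (x : X) (t : List X) (y : X) :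
    P r hnd (x :: t) y = (if y = x then 1 else 0) + P r hnd t ((sp r hnd x)⁻¹ y) := rfl

lemma Lam_append (l m : List X) : Lam r hnd (l ++ m) = Lam r hnd l * Lam r hnd m := by
  induction l with
  | nil => simp [Lam_nil]
  | cons x t ih => simp [Lam_cons, ih, mul_assoc]

lemma P_append (l m : List X) (y : X) :
    P r hnd (l ++ m) y = P r hnd l y + P r hnd m ((Lam r hnd l)⁻¹ y) := by
  induction l generalizing y with
  | nil => simp [P_nil, Lam_nil]
  | cons x t ih =>
      simp only [List.cons_append, P_cons, ih, Lam_cons, mul_inv_rev, Equiv.Perm.mul_apply,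
        add_assoc]

lemma Lam_replicate (k : ℕ) (x : X) :
    Lam r hnd (List.replicate k x) = sp r hnd x ^ k := by
  induction k with
  | zero => simp [Lam_nil]
  | succ n ih => rw [List.replicate_succ, Lam_cons, ih, pow_succ']

lemma P_replicate (hsf : ∀ x, sig r x x = x) (k : ℕ) (x y : X) :
    P r hnd (List.replicate k x) y = k * (if y = x then 1 else 0) := by
  have hfix : (sp r hnd x)⁻¹ x = x := Equiv.Perm.inv_eq_iff_eq.mpr (hsf x).symm
  induction k generalizing y with
  | zero => simp [P_nil]
  | succ n ih =>
      rw [List.replicate_succ, P_cons, ih]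
      by_cases h : y = x
      · subst h; simp [hfix]; ring
      · have h2 : (sp r hnd x)⁻¹ y ≠ x := by
          intro hc
          apply h
          have := congrArg (sp r hnd x) hc
          rw [Equiv.Perm.coe_inv, Equiv.apply_symm_apply] at this
          rw [this]; exact hsf x
        simp only [Equiv.Perm.coe_inv] at h2
        simp [h, h2]


variable {r} in
lemma pos_of_P_cons {a : X} {t : List X} {m : List X}
    (h : P r hnd (a :: t) = P r hnd m) : 0 < P r hnd m a := by
  have := congrFun h a
  rw [P_cons, if_pos rfl] at this
  omega

/-- Key reachability lemma: if `x` occurs in the cocycle of `m`, then `m` is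
equivalent (same cocycle, same permutation) to a word starting with `x`. -/
lemma exists_head (Hinv : ∀ x y, sig r (sig r x y) (tau r y x) = x)
    (Hmul : ∀ x y, sp r hnd x * sp r hnd y =
      sp r hnd (sig r x y) * sp r hnd (tau r y x)) :
    ∀ m : List X, ∀ x : X, 0 < P r hnd m x →
    ∃ m' : List X, m.length = m'.length + 1 ∧ P r hnd m = P r hnd (x :: m') ∧
      Lam r hnd m = Lam r hnd (x :: m') := by
  intro m
  induction m with
  | nil => intro x h; simp [P_nil] at h
  | cons b t ih =>
      intro x h
      by_cases hxb : x = b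
      · subst hxb; exact ⟨t, rfl, rfl, rfl⟩
      · have h' : 0 < P r hnd t ((sp r hnd b)⁻¹ x) := by
          have := h
          rw [P_cons] at this
          simpa [Ne.symm hxb, hxb] using this
        obtain ⟨t', hlen, hP, hL⟩ := ih ((sp r hnd b)⁻¹ x) h'
        set y := (sp r hnd b)⁻¹ x with hy
        have hxby : sp r hnd b y = x := Equiv.apply_symm_apply _ _
        have hsig : sig r b y = x := hxby
        have hmul' : sp r hnd b * sp r hnd y = sp r hnd x * sp r hnd (tau r y b) := by
          have := Hmul b y; rwa [hsig] at this
        have hback : sp r hnd x (tau r y b) = b := by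
          have := Hinv b y; rwa [hsig] at this
        refine ⟨tau r y b :: t', by simp [hlen], ?_, ?_⟩
        · funext z
          rw [P_cons, hP, P_cons, P_cons, P_cons]
          have i1 : ((sp r hnd b)⁻¹ z = y) ↔ (z = x) := by
            constructor
            · intro hc; rw [← hxby, ← hc, Equiv.Perm.coe_inv, Equiv.apply_symm_apply]
            · intro hc; rw [hc, ← hxby, Equiv.Perm.coe_inv, Equiv.symm_apply_apply]
          have i2 : (z = b) ↔ ((sp r hnd x)⁻¹ z = tau r y b) := by
            constructor
            · intro hc; rw [hc]; exact Equiv.Perm.inv_eq_iff_eq.mpr hback.symm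
            · intro hc
              have := congrArg (sp r hnd x) hc
              rw [Equiv.Perm.coe_inv, Equiv.apply_symm_apply, hback] at this
              exact this
          have e3 : (sp r hnd y)⁻¹ ((sp r hnd b)⁻¹ z)
              = (sp r hnd (tau r y b))⁻¹ ((sp r hnd x)⁻¹ z) := by
            have := congrArg (fun g : Equiv.Perm X => g⁻¹ z) hmul'
            simpa [mul_inv_rev, Equiv.Perm.mul_apply] using this
          rw [if_congr i1 rfl rfl, if_congr i2 rfl rfl, e3]
          ring
        · rw [Lam_cons, hL, Lam_cons, Lam_cons, Lam_cons, ← mul_assoc, ← mul_assoc, hmul']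

/-- Main lemma: the cocycle determines the permutation. -/
lemma lam_eq_of_P_eq (Hinv : ∀ x y, sig r (sig r x y) (tau r y x) = x)
    (Hmul : ∀ x y, sp r hnd x * sp r hnd y =
      sp r hnd (sig r x y) * sp r hnd (tau r y x)) :
    ∀ l m : List X, P r hnd l = P r hnd m → Lam r hnd l = Lam r hnd m := by
  intro l
  induction l with
  | nil =>
      intro m h
      cases m with
      | nil => rfl
      | cons b t =>
          have := congrFun h b
          rw [P_nil, P_cons, if_pos rfl] at this
          omega
  | cons a t ih =>
      intro m h
      obtain ⟨m', _, hPm, hLm⟩ := exists_head r hnd Hinv Hmul m a (pos_of_P_cons hnd h)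
      have hP2 : P r hnd t = P r hnd m' := by
        funext z
        have := congrFun (h.trans hPm) (sp r hnd a z)
        rw [P_cons, P_cons, Equiv.Perm.coe_inv, Equiv.symm_apply_apply] at this
        exact Nat.add_left_cancel this
      rw [hLm, Lam_cons, Lam_cons, ih m' hP2]

/-- Inverses are realizable. -/
lemma exists_inv (p : ℕ) (hp : 0 < p) (Hp : ∀ x : X, sp r hnd x ^ p = 1) :
    ∀ l : List X, ∃ m : List X, Lam r hnd m = (Lam r hnd l)⁻¹ := by
  intro l
  induction l with
  | nil => exact ⟨[], by simp [Lam_nil]⟩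
  | cons x t ih =>
      obtain ⟨m, hm⟩ := ih
      refine ⟨m ++ List.replicate (p - 1) x, ?_⟩
      rw [Lam_append, Lam_replicate, hm, Lam_cons, mul_inv_rev]
      congr 1
      symm
      apply inv_eq_of_mul_eq_one_right
      rw [← pow_succ']
      have hpp : p - 1 + 1 = p := Nat.succ_pred_eq_of_pos hp
      rw [hpp]
      exact Hp x

/-- Realization of `p`-divisible targets by words acting trivially. -/
lemma exists_p_word [Fintype X] (p : ℕ) (Hp : ∀ x : X, sp r hnd x ^ p = 1)
    (hsf : ∀ x, sig r x x = x) (c : X → ℕ) :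
    ∃ l : List X, (∀ z, P r hnd l z = p * c z) ∧ Lam r hnd l = 1 := by
  have key : ∀ (n : ℕ) (c : X → ℕ), (∑ x, c x) ≤ n →
      ∃ l : List X, (∀ z, P r hnd l z = p * c z) ∧ Lam r hnd l = 1 := by
    intro n
    induction n with
    | zero =>
        intro c hc
        have h0 : ∀ x, c x = 0 := by
          intro x
          have := Finset.single_le_sum (f := c) (fun i _ => Nat.zero_le _) (Finset.mem_univ x)
          omega
        exact ⟨[], fun z => by simp [P_nil, h0], rfl⟩
    | succ n ihn =>
        intro c hc
        by_cases h0 : ∀ x, c x = 0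
        · exact ⟨[], fun z => by simp [P_nil, h0], rfl⟩
        · push_neg at h0
          obtain ⟨x, hx⟩ := h0
          set c' : X → ℕ := fun z => c z - (if z = x then 1 else 0) with hc'
          have hsplit : ∀ z, c z = c' z + (if z = x then 1 else 0) := by
            intro z
            by_cases hz : z = x
            · subst hz; simp [hc']; omega
            · simp [hc', hz]
          have hsum : (∑ z, c' z) ≤ n := by
            have h1 : (∑ z, c z) = (∑ z, c' z) + 1 := by
              rw [Finset.sum_congr rfl (fun z _ => hsplit z), Finset.sum_add_distrib,
                Finset.sum_ite_eq' Finset.univ x (fun _ => 1)]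
              simp
            omega
          obtain ⟨l', hP', hL'⟩ := ihn c' hsum
          refine ⟨List.replicate p x ++ l', ?_, ?_⟩
          · intro z
            rw [P_append, P_replicate r hnd hsf, Lam_replicate, Hp x, hP']
            have : ((1 : Equiv.Perm X))⁻¹ z = z := rfl
            rw [this, hsplit z]
            ring
          · rw [Lam_append, Lam_replicate, Hp x, hL', one_mul]
  exact key (∑ x, c x) c le_rfl

/-- Realization of arbitrary targets. -/
lemma P_surj [Fintype X] (c : X → ℕ) : ∃ l : List X, ∀ z, P r hnd l z = c z := by
  have key : ∀ (n : ℕ) (c : X → ℕ), (∑ x, c x) ≤ n →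
      ∃ l : List X, ∀ z, P r hnd l z = c z := by
    intro n
    induction n with
    | zero =>
        intro c hc
        have h0 : ∀ x, c x = 0 := by
          intro x
          have := Finset.single_le_sum (f := c) (fun i _ => Nat.zero_le _) (Finset.mem_univ x)
          omega
        exact ⟨[], fun z => by simp [P_nil, h0]⟩
    | succ n ihn =>
        intro c hc
        by_cases h0 : ∀ x, c x = 0
        · exact ⟨[], fun z => by simp [P_nil, h0]⟩
        · push_neg at h0
          obtain ⟨x, hx⟩ := h0
          set d : X → ℕ := fun w => c (sp r hnd x w) - (if sp r hnd x w = x then 1 else 0)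
            with hd
          have hsum : (∑ w, d w) ≤ n := by
            have h1 : (∑ w, d w) = ∑ z, (c z - (if z = x then 1 else 0)) :=
              Fintype.sum_equiv (sp r hnd x) _ _ (fun w => rfl)
            have h2 : (∑ z, c z) = (∑ z, (c z - (if z = x then 1 else 0))) + 1 := by
              have hsplit : ∀ z, c z = (c z - (if z = x then 1 else 0)) + (if z = x then 1 else 0) := by
                intro z
                by_cases hz : z = x
                · subst hz; simp; omega
                · simp [hz]
              rw [Finset.sum_congr rfl (fun z _ => hsplit z), Finset.sum_add_distrib,
                Finset.sum_ite_eq' Finset.univ x (fun _ => 1)]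
              simp
            omega
          obtain ⟨t, ht⟩ := ihn d hsum
          refine ⟨x :: t, ?_⟩
          intro z
          rw [P_cons, ht]
          have happ : sp r hnd x ((sp r hnd x)⁻¹ z) = z := Equiv.apply_symm_apply _ _
          rw [hd]
          simp only [happ]
          by_cases hz : z = x
          · subst hz; simp; omega
          · simp [hz]
  exact key (∑ x, c x) c le_rfl

/-- mod-`p` version of the main lemma. -/
lemma lam_eq_of_modEq [Fintype X] (p : ℕ)
    (Hinv : ∀ x y, sig r (sig r x y) (tau r y x) = x)
    (Hmul : ∀ x y, sp r hnd x * sp r hnd y =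
      sp r hnd (sig r x y) * sp r hnd (tau r y x))
    (Hp : ∀ x : X, sp r hnd x ^ p = 1) (hsf : ∀ x, sig r x x = x)
    (l m : List X) (h : ∀ z, P r hnd l z ≡ P r hnd m z [MOD p]) :
    Lam r hnd l = Lam r hnd m := by
  have hdl : ∀ z, p ∣ max (P r hnd l z) (P r hnd m z) - P r hnd l z := by
    intro z
    rcases le_total (P r hnd l z) (P r hnd m z) with hle | hle
    · rw [Nat.max_eq_right hle]
      exact (Nat.modEq_iff_dvd' hle).mp (h z)
    · rw [Nat.max_eq_left hle, Nat.sub_self]; exact dvd_zero p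
  have hdm : ∀ z, p ∣ max (P r hnd l z) (P r hnd m z) - P r hnd m z := by
    intro z
    rcases le_total (P r hnd m z) (P r hnd l z) with hle | hle
    · rw [Nat.max_eq_left hle]
      exact (Nat.modEq_iff_dvd' hle).mp (h z).symm
    · rw [Nat.max_eq_right hle, Nat.sub_self]; exact dvd_zero p
  obtain ⟨w1, hw1P, hw1L⟩ := exists_p_word r hnd p Hp hsf
    (fun u => (max (P r hnd l (Lam r hnd l u)) (P r hnd m (Lam r hnd l u))
      - P r hnd l (Lam r hnd l u)) / p)
  obtain ⟨w2, hw2P, hw2L⟩ := exists_p_word r hnd p Hp hsf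
    (fun u => (max (P r hnd l (Lam r hnd m u)) (P r hnd m (Lam r hnd m u))
      - P r hnd m (Lam r hnd m u)) / p)
  have h1 : ∀ z, P r hnd (l ++ w1) z = max (P r hnd l z) (P r hnd m z) := by
    intro z
    rw [P_append, hw1P, Equiv.Perm.coe_inv, Equiv.apply_symm_apply, Nat.mul_div_cancel' (hdl z)]
    have := le_max_left (P r hnd l z) (P r hnd m z)
    omega
  have h2 : ∀ z, P r hnd (m ++ w2) z = max (P r hnd l z) (P r hnd m z) := by
    intro z
    rw [P_append, hw2P, Equiv.Perm.coe_inv, Equiv.apply_symm_apply, Nat.mul_div_cancel' (hdm z)]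
    have := le_max_right (P r hnd l z) (P r hnd m z)
    omega
  have := lam_eq_of_P_eq r hnd Hinv Hmul (l ++ w1) (m ++ w2)
    (funext fun z => (h1 z).trans (h2 z).symm)
  rwa [Lam_append, Lam_append, hw1L, hw2L, mul_one, mul_one] at this

end YBAux


open YBAux in
theorem permutation_group_order' {X : Type*} [Fintype X] (r : X × X → X × X)
    (hnd : Nondegenerate r) (hinv : Function.Involutive r)
    (hsf : ∀ x : X, r (x, x) = (x, x)) (p : ℕ) (hp : 0 < p)
    (hpord : ∀ x : X, (sig r x)^[p] = id)
    (φ : YBGroup r →* Equiv.Perm X)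
    (hφ : ∀ x y : X, φ (ybι r x) y = sig r x y) :
    Nat.card φ.range ∣ p ^ Fintype.card X := by
  letI := Classical.decEq X
  haveI : NeZero p := ⟨hp.ne'⟩
  -- basic identities
  have Hsf : ∀ x : X, sig r x x = x := fun x => congrArg Prod.fst (hsf x)
  have Hinv2 : ∀ x y : X, sig r (sig r x y) (tau r y x) = x := by
    intro x y
    have h := congrArg Prod.fst (hinv (x, y))
    simpa [sig, tau] using h
  have Hp : ∀ x : X, sp r hnd x ^ p = 1 := by
    intro x
    ext z
    have h1 : (sp r hnd x ^ p) z = (sig r x)^[p] z :=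
      congrFun (Equiv.Perm.coe_pow _ p) z
    rw [h1, hpord x]; rfl
  have hφι : ∀ x : X, φ (ybι r x) = sp r hnd x := by
    intro x; ext z; exact hφ x z
  have hGrel : ∀ x y : X, ybι r x * ybι r y =
      ybι r (sig r x y) * ybι r (tau r y x) := by
    intro x y
    have hw : FreeGroup.of x * FreeGroup.of y *
        (FreeGroup.of (sig r x y) * FreeGroup.of (tau r y x))⁻¹ ∈ ybRels r := ⟨x, y, rfl⟩
    have h1 : PresentedGroup.mk (ybRels r) (FreeGroup.of x * FreeGroup.of y *
        (FreeGroup.of (sig r x y) * FreeGroup.of (tau r y x))⁻¹) = 1 :=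
      (QuotientGroup.eq_one_iff _).mpr (Subgroup.subset_normalClosure hw)
    rw [map_mul, map_inv, map_mul] at h1
    exact mul_inv_eq_one.mp h1
  have Hmul : ∀ x y : X, sp r hnd x * sp r hnd y =
      sp r hnd (sig r x y) * sp r hnd (tau r y x) := by
    intro x y
    have h := congrArg φ (hGrel x y)
    rwa [map_mul, map_mul, hφι, hφι, hφι, hφι] at h
  -- the range of φ is the set of products of the σ's
  let Γ : Subgroup (Equiv.Perm X) :=
    { carrier := {s | ∃ l : List X, Lam r hnd l = s}
      one_mem' := ⟨[], rfl⟩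
      mul_mem' := by rintro a b ⟨l, rfl⟩ ⟨m, rfl⟩; exact ⟨l ++ m, Lam_append r hnd l m⟩
      inv_mem' := by rintro a ⟨l, rfl⟩; exact exists_inv r hnd p hp Hp l }
  have hmemΓ : ∀ l : List X, Lam r hnd l ∈ φ.range := by
    intro l
    induction l with
    | nil => exact one_mem _
    | cons x t ih =>
        rw [Lam_cons]
        exact mul_mem ⟨ybι r x, hφι x⟩ ih
  have hΓ : φ.range = Γ := by
    apply le_antisymm
    · rw [MonoidHom.range_eq_map, ← PresentedGroup.closure_range_of (ybRels r),
        MonoidHom.map_closure]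
      refine (Subgroup.closure_le Γ).mpr ?_
      rintro s ⟨g, ⟨x, rfl⟩, rfl⟩
      exact ⟨[x], by rw [Lam_cons, Lam_nil, mul_one]; exact (hφι x).symm⟩
    · rintro s ⟨l, rfl⟩
      exact hmemΓ l
  -- mod-p cocycle
  set QP : List X → X → ZMod p := fun l z => ((P r hnd l z : ℕ) : ZMod p) with hQPdef
  have hsurjQ : ∀ q : X → ZMod p, ∃ l : List X, QP l = q := by
    intro q
    obtain ⟨l, hl⟩ := P_surj r hnd (fun z => (q z).val)
    refine ⟨l, funext fun z => ?_⟩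
    show ((P r hnd l z : ℕ) : ZMod p) = q z
    rw [hl z]
    exact ZMod.natCast_rightInverse (q z)
  have hgraph : ∀ l m : List X, QP l = QP m → Lam r hnd l = Lam r hnd m := by
    intro l m hq
    apply lam_eq_of_modEq r hnd p Hinv2 Hmul Hp Hsf
    intro z
    exact (ZMod.natCast_eq_natCast_iff _ _ _).mp (congrFun hq z)
  choose w hw using hsurjQ
  set ν : (X → ZMod p) → Equiv.Perm X := fun q => Lam r hnd (w q) with hνdef
  have hνL : ∀ l : List X, ν (QP l) = Lam r hnd l := fun l => hgraph _ _ (hw (QP l))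
  have hQPapp : ∀ (l m : List X) (z : X),
      QP (l ++ m) z = QP l z + QP m ((Lam r hnd l)⁻¹ z) := by
    intro l m z
    show ((P r hnd (l ++ m) z : ℕ) : ZMod p) = _
    rw [P_append, Nat.cast_add]
  -- counting
  letI : Fintype (Equiv.Perm X) := Fintype.ofFinite _
  let img : Finset (Equiv.Perm X) := Finset.image ν Finset.univ
  let k := (Finset.univ.filter fun q => ν q = 1).card
  have hfib : ∀ s ∈ img, (Finset.univ.filter fun q => ν q = s).card = k := by
    intro s hs
    obtain ⟨q0, -, hq0⟩ := Finset.mem_image.mp hs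
    have hls : Lam r hnd (w q0) = s := hq0
    obtain ⟨linv, hlinv⟩ := exists_inv r hnd p hp Hp (w q0)
    rw [hls] at hlinv
    apply le_antisymm
    · -- fiber(s) → fiber(1)
      apply Finset.card_le_card_of_injOn (fun q => fun z => q z + QP linv (s⁻¹ z))
      · intro q hq
        simp only [Finset.mem_coe, Finset.mem_filter, Finset.mem_univ, true_and] at hq ⊢
        have hlam : Lam r hnd (w q) = s := hq
        have hq' : (fun z => q z + QP linv (s⁻¹ z)) = QP (w q ++ linv) := by
          funext z
          rw [hQPapp, hlam, congrFun (hw q) z]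
        rw [hq', hνL, Lam_append, hlinv, hlam]
        exact mul_inv_cancel s
      · intro q1 _ q2 _ h
        funext v
        exact add_right_cancel (congrFun h v)
    · -- fiber(1) → fiber(s)
      apply Finset.card_le_card_of_injOn (fun q => fun z => QP (w q0) z + q (s⁻¹ z))
      · intro q hq
        simp only [Finset.mem_coe, Finset.mem_filter, Finset.mem_univ, true_and] at hq ⊢
        have hlam : Lam r hnd (w q) = 1 := hq
        have hq' : (fun z => QP (w q0) z + q (s⁻¹ z)) = QP (w q0 ++ w q) := by
          funext z
          rw [hQPapp, hls, congrFun (hw q) (s⁻¹ z)]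
        rw [hq', hνL, Lam_append, hls, hlam, mul_one]
      · intro q1 _ q2 _ h
        funext v
        have h2 := add_left_cancel (congrFun h (s v))
        simpa using h2
  have hcardA : Fintype.card (X → ZMod p) = img.card * k := by
    rw [← Finset.card_univ, Finset.card_eq_sum_card_fiberwise
      (fun q _ => Finset.mem_image_of_mem ν (Finset.mem_univ q)),
      Finset.sum_congr rfl hfib, Finset.sum_const, smul_eq_mul]
  have hAcard : Fintype.card (X → ZMod p) = p ^ Fintype.card X := by
    rw [← Nat.card_eq_fintype_card, Nat.card_fun, Nat.card_zmod, Nat.card_eq_fintype_card]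
  have hcardrange : Nat.card φ.range = img.card := by
    have hset : (φ.range : Set (Equiv.Perm X)) = ↑img := by
      rw [hΓ]
      ext s
      simp only [img, Finset.coe_image, Finset.coe_univ, Set.image_univ, Set.mem_range]
      constructor
      · rintro ⟨l, rfl⟩; exact ⟨QP l, hνL l⟩
      · rintro ⟨q, rfl⟩; exact ⟨w q, rfl⟩
    calc Nat.card φ.range = Nat.card (φ.range : Set (Equiv.Perm X)) := rfl
      _ = Nat.card (↑img : Set (Equiv.Perm X)) := Nat.card_congr (Equiv.setCongr hset)
      _ = img.card := by rw [Nat.card_coe_set_eq, Set.ncard_coe_finset]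
  rw [hcardrange]
  exact ⟨k, by rw [← hAcard]; exact hcardA⟩


/-- For a finite square-free solution `(X,r)` of order `n`
with cyclic degree `p`, and any group homomorphism `φ : G(X,r) →* Sym(X)` with
`φ(ι(x)) = σ_x`, the order of the permutation group `𝒢 = φ(G)` divides `p^n`;
in particular, if `p` is prime then `𝒢` is a `p`-group. -/
theorem permutation_group_order {X : Type*} [Fintype X] (r : X × X → X × X)
    (hnd : Nondegenerate r) (hinv : Function.Involutive r) (hbr : IsBraided r)
    (hsf : ∀ x : X, r (x, x) = (x, x)) (p : ℕ) (hp : 0 < p)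
    (hpord : ∀ x : X, (sig r x)^[p] = id)
    (hpmin : ∀ q : ℕ, 0 < q → (∀ x : X, (sig r x)^[q] = id) → p ≤ q)
    (φ : YBGroup r →* Equiv.Perm X) (hφ : ∀ x y : X, φ (ybι r x) y = sig r x y) :
    Nat.card φ.range ∣ p ^ Fintype.card X ∧ (p.Prime → IsPGroup p φ.range) := by
  have hdvd : Nat.card φ.range ∣ p ^ Fintype.card X :=
    permutation_group_order' r hnd hinv hsf p hp hpord φ hφ
  refine ⟨hdvd, fun hprime => ?_⟩
  obtain ⟨m, -, hcard⟩ := (Nat.dvd_prime_pow hprime).mp hdvd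
  exact IsPGroup.of_card hcard
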